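/- For every positive integer s there exists a positive integer s' such that every linear 3-uniform hypergraph G that contains a matching of size s' contains an induced matching of size s, i.e., there are s pairwise disjoint edges e_1, …, e_s of G such that the induced subhypergraph G[e_1 ∪ ⋯ ∪ e_s] has exactly the s edges e_1, …, e_s. -/
import Mathlib


open Finset

/-- `(V, E)` is a hypergraph: every edge is a nonempty subset of `V`. -/
def IsHypergraph {α : Type*} (V : Finset α) (E : Finset (Finset α)) : Prop :=
  ∀ e ∈ E, e ⊆ V ∧ e.Nonempty

/-- A matching: a set of pairwise disjoint edges. -/
def IsMatching {α : Type*} (M : Finset (Finset α)) : Prop :=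
  ∀ e ∈ M, ∀ f ∈ M, e ≠ f → Disjoint e f

/-- `M` is an induced matching of the hypergraph with edge set `E`: a matching
`M ⊆ E` such that the subhypergraph induced on the union of the edges of `M`
has no edges other than those of `M`. -/
def IsInducedMatching {α : Type*} [DecidableEq α] (E : Finset (Finset α))
    (M : Finset (Finset α)) : Prop :=
  M ⊆ E ∧ IsMatching M ∧ ∀ f ∈ E, f ⊆ M.biUnion id → f ∈ M

/-- For every `s ≥ 1` there is `s' ≥ 1` such that every linear 3-uniform
hypergraph containing a matching of size `s'` contains an induced matching of
size `s`. -/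
theorem induced_matching_of_large_matching (s : ℕ) (hs : 0 < s) :
    ∃ s' : ℕ, 0 < s' ∧
      ∀ (α : Type) [DecidableEq α] (V : Finset α) (E : Finset (Finset α)),
        IsHypergraph V E → (∀ e ∈ E, e.card = 3) →
        (∀ e ∈ E, ∀ f ∈ E, e ≠ f → (e ∩ f).card ≤ 1) →
        (∃ M ⊆ E, IsMatching M ∧ M.card = s') →
        ∃ M : Finset (Finset α), IsInducedMatching E M ∧ M.card = s := by
  classical
  refine ⟨5 * s * s + s, by positivity, ?_⟩
  intro α _ V E hH h3 hlin ⟨M, hME, hMm, hMcard⟩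
  -- Greedy construction: for every k ≤ s there is a "good" sub-matching of size k
  have key : ∀ k, k ≤ s → ∃ S, S ⊆ M ∧ S.card = k ∧
      ∀ f ∈ E, f ⊆ S.biUnion id → f ∈ S := by
    intro k hk
    induction k with
    | zero =>
      refine ⟨∅, empty_subset _, card_empty, ?_⟩
      intro f hf hsub
      simp only [biUnion_empty, subset_empty] at hsub
      have := h3 f hf
      rw [hsub] at this
      simp at this
    | succ k ih =>
      obtain ⟨S, hSM, hScard, hSgood⟩ := ih (Nat.le_of_succ_le hk)
      set u : Finset α := S.biUnion id with hu
      set T : Finset (Finset α) := u.powersetCard 2 with hT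
      -- the set of bad candidate edges
      set B : Finset (Finset α) := (M \ S).filter
        (fun e => ∃ f ∈ E, f ⊆ (insert e S).biUnion id ∧ f ∉ insert e S) with hB
      -- every bad candidate yields a pair of covered vertices
      have hBg : ∀ e ∈ B, ∃ p, p ∈ T ∧ ∃ f ∈ E,
          f ⊆ (insert e S).biUnion id ∧ f ∉ insert e S ∧ p ⊆ f := by
        intro e heB
        rw [hB, mem_filter] at heB
        obtain ⟨heMS, f, hfE, hfsub, hfnot⟩ := heB
        have heM : e ∈ M := (mem_sdiff.mp heMS).1
        have hfe : f ≠ e := fun h => hfnot (h ▸ mem_insert_self e S)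
        have hlin' : (e ∩ f).card ≤ 1 := hlin e (hME heM) f hfE (fun h => hfe h.symm)
        have hfsub' : f ⊆ e ∪ u := by rwa [biUnion_insert] at hfsub
        have hcard2 : 2 ≤ (f ∩ u).card := by
          have h1 : f = (f ∩ e) ∪ (f ∩ u) := by
            rw [← inter_union_distrib_left, inter_eq_left.mpr hfsub']
          have h2 : f.card ≤ (f ∩ e).card + (f ∩ u).card := by
            calc f.card = ((f ∩ e) ∪ (f ∩ u)).card := by rw [← h1]
            _ ≤ (f ∩ e).card + (f ∩ u).card := card_union_le _ _
          have h3' : f.card = 3 := h3 f hfE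
          have h4 : (f ∩ e).card ≤ 1 := by rwa [inter_comm] at hlin'
          omega
        obtain ⟨p, hpsub, hpcard⟩ := exists_subset_card_eq hcard2
        refine ⟨p, ?_, f, hfE, hfsub, hfnot, hpsub.trans inter_subset_left⟩
        rw [hT, mem_powersetCard]
        exact ⟨hpsub.trans inter_subset_right, hpcard⟩
      -- the charging map
      set g : Finset α → Finset α := fun e =>
        if h : ∃ p, p ∈ T ∧ ∃ f ∈ E,
            f ⊆ (insert e S).biUnion id ∧ f ∉ insert e S ∧ p ⊆ f
        then h.choose else ∅ with hg
      have hgmem : ∀ e ∈ B, g e ∈ T ∧ ∃ f ∈ E,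
          f ⊆ (insert e S).biUnion id ∧ f ∉ insert e S ∧ g e ⊆ f := by
        intro e heB
        have h := hBg e heB
        rw [hg]
        simp only [dif_pos h]
        exact h.choose_spec
      -- disjointness facts
      have hdisj : ∀ e ∈ M, e ∉ S → Disjoint e u := by
        intro e heM heS
        rw [hu, disjoint_biUnion_right]
        intro a haS
        exact hMm e heM a (hSM haS) (fun h => heS (h ▸ haS))
      -- injectivity of the charging map on B
      have hinj : Set.InjOn g B := by
        intro e₁ he₁ e₂ he₂ hge
        by_contra hne
        obtain ⟨hp₁, f₁, hf₁E, hf₁sub, hf₁not, hpf₁⟩ := hgmem e₁ he₁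
        obtain ⟨hp₂, f₂, hf₂E, hf₂sub, hf₂not, hpf₂⟩ := hgmem e₂ he₂
        rw [hge] at hpf₁
        have he₁MS : e₁ ∈ M \ S := (mem_filter.mp he₁).1
        have he₂MS : e₂ ∈ M \ S := (mem_filter.mp he₂).1
        have he₁M : e₁ ∈ M := (mem_sdiff.mp he₁MS).1
        have he₂M : e₂ ∈ M := (mem_sdiff.mp he₂MS).1
        -- f₁ meets e₁
        have hf₁e₁ : (f₁ ∩ e₁).Nonempty := by
          rw [nonempty_iff_ne_empty]
          intro hcon
          have : f₁ ⊆ u := by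
            intro x hx
            have := (by rwa [biUnion_insert] at hf₁sub : f₁ ⊆ e₁ ∪ u) hx
            rcases mem_union.mp this with h | h
            · exact absurd (mem_inter.mpr ⟨hx, h⟩) (by simp [hcon])
            · exact h
          exact hf₁not (mem_insert_of_mem (hSgood f₁ hf₁E this))
        obtain ⟨x, hx⟩ := hf₁e₁
        have hxf₁ : x ∈ f₁ := (mem_inter.mp hx).1
        have hxe₁ : x ∈ e₁ := (mem_inter.mp hx).2
        -- x is not in f₂
        have hxf₂ : x ∉ f₂ := by
          intro hcon
          have := (by rwa [biUnion_insert] at hf₂sub : f₂ ⊆ e₂ ∪ u) hcon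
          rcases mem_union.mp this with h | h
          · exact disjoint_left.mp (hMm e₁ he₁M e₂ he₂M hne) hxe₁ h
          · exact disjoint_left.mp (hdisj e₁ he₁M (mem_sdiff.mp he₁MS).2) hxe₁ h
        have hf₁f₂ : f₁ ≠ f₂ := fun h => hxf₂ (h ▸ hxf₁)
        have := hlin f₁ hf₁E f₂ hf₂E hf₁f₂
        have hsub12 : g e₂ ⊆ f₁ ∩ f₂ := subset_inter hpf₁ hpf₂
        have hc2 : (g e₂).card = 2 := (mem_powersetCard.mp (hT ▸ hp₂)).2
        have := card_le_card hsub12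
        omega
      -- count bad candidates
      have hBcard : B.card ≤ (3 * k).choose 2 := by
        have h1 : B.card ≤ T.card := card_le_card_of_injOn g (fun e he => (hgmem e he).1) hinj
        have h2 : T.card = u.card.choose 2 := by rw [hT, card_powersetCard]
        have h3u : u.card ≤ 3 * k := by
          calc u.card ≤ ∑ e ∈ S, e.card := card_biUnion_le
          _ ≤ ∑ _e ∈ S, 3 := by
            apply sum_le_sum
            intro e heS
            exact le_of_eq (h3 e (hME (hSM heS)))
          _ = 3 * k := by rw [sum_const, hScard]; ring
        calc B.card ≤ u.card.choose 2 := h2 ▸ h1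
        _ ≤ (3 * k).choose 2 := Nat.choose_le_choose 2 h3u
      -- arithmetic: there is a non-bad candidate
      have hMS : (M \ S).card = 5 * s * s + s - k := by
        rw [card_sdiff_of_subset hSM, hMcard, hScard]
      have hklt : k < s := hk
      have hch : (3 * k).choose 2 ≤ 5 * (k * k) := by
        rw [Nat.choose_two_right]
        calc 3 * k * (3 * k - 1) / 2 ≤ 10 * (k * k) / 2 := by
              apply Nat.div_le_div_right
              calc 3 * k * (3 * k - 1) ≤ 3 * k * (3 * k) :=
                    Nat.mul_le_mul_left _ (Nat.sub_le _ _)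
              _ ≤ 10 * (k * k) := by nlinarith
        _ = 5 * (k * k) := by omega
      have harith : B.card < (M \ S).card := by
        have hsq : (k + 1) * (k + 1) ≤ s * s := Nat.mul_le_mul hk hk
        have h9 : 5 * (k * k) + k < 5 * s * s + s := by nlinarith
        have hks : k ≤ 5 * s * s + s := by nlinarith
        omega
      obtain ⟨e, heMS, heB⟩ : ∃ e ∈ M \ S, e ∉ B := by
        by_contra hcon
        push_neg at hcon
        have : (M \ S) ⊆ B := hcon
        exact absurd (card_le_card this) (by omega)
      have heM : e ∈ M := (mem_sdiff.mp heMS).1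
      have heS : e ∉ S := (mem_sdiff.mp heMS).2
      refine ⟨insert e S, ?_, ?_, ?_⟩
      · intro a ha
        rcases mem_insert.mp ha with h | h
        · exact h ▸ heM
        · exact hSM h
      · rw [card_insert_of_notMem heS, hScard]
      · intro f hfE hfsub
        by_contra hfnot
        exact heB (mem_filter.mpr ⟨heMS, f, hfE, hfsub, hfnot⟩)
  obtain ⟨S, hSM, hScard, hSgood⟩ := key s le_rfl
  exact ⟨S, ⟨hSM.trans hME, fun e he f hf => hMm e (hSM he) f (hSM hf), hSgood⟩, hScard⟩
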